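/- Let Θ, Θ̃ : [0,∞) → ℝ^N be two solutions of the inertial Kuramoto model for N identical oscillators with all-to-all coupling (parameters m, γ, κ > 0), with Σ_i θ_i(0) = Σ_i θ̃_i(0) = 0 and Σ_i ω_i(0) = Σ_i ω̃_i(0) = 0. Suppose γ > 1/2 and that there exists S ∈ (0, π) with D(Θ(t)) + D(Θ̃(t)) ≤ S for all t ≥ 0; set Γ̃ := sin(S)/S. Let X(t) := Θ(t) − Θ̃(t), V(t) := Ω(t) − Ω̃(t), and for ε > 0 define the Lyapunov functional E_ε(t) := ε·γ·‖X(t)‖² + 2mε·⟨X(t), V(t)⟩ + m·‖V(t)‖². Then for every ε with κ/(2Γ̃) ≤ ε ≤ (2γ − 1)/(2m), and for all t > 0, d/dt E_ε(t) + min{ 2γ − 1 − 2mε, κ·(2Γ̃·ε − κ) }·(‖X(t)‖² + ‖V(t)‖²) ≤ 0. -/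

import Mathlib

open Real Finset

/-- The phase diameter of a configuration `Θ : Fin N → ℝ`:
`D(Θ) = max_{i,j} (Θ_i − Θ_j)`. -/
noncomputable def phaseDiam {N : ℕ} (Θ : Fin N → ℝ) : ℝ :=
  ⨆ p : Fin N × Fin N, (Θ p.1 - Θ p.2)

lemma core_sin (S u w : ℝ) (hS0 : 0 < S) (hSπ : S < Real.pi)
    (hu : |u| ≤ S/2) (hw0 : 0 ≤ w) (hw : w ≤ S/2) :
    (Real.sin S / S) * w^2 ≤ Real.cos u * (Real.sin w * w) := by
  have hπ := Real.pi_pos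
  have hsinw0 : 0 ≤ Real.sin w := Real.sin_nonneg_of_nonneg_of_le_pi hw0 (by linarith)
  have hcosu : Real.cos (S/2) ≤ Real.cos u := by
    rw [← Real.cos_abs u]
    exact Real.cos_le_cos_of_nonneg_of_le_pi (abs_nonneg u) (by linarith) hu
  have hcosS : 0 ≤ Real.cos (S/2) :=
    Real.cos_nonneg_of_mem_Icc ⟨by linarith, by linarith⟩
  have hsinS2 : 0 ≤ Real.sin (S/2) :=
    Real.sin_nonneg_of_nonneg_of_le_pi (by linarith) (by linarith)
  have hconc : (2*w/S) * Real.sin (S/2) ≤ Real.sin w := by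
    have ha : (0:ℝ) ≤ 1 - 2*w/S := by
      rw [sub_nonneg]; exact div_le_one_of_le₀ (by linarith) hS0.le
    have hb : (0:ℝ) ≤ 2*w/S := by positivity
    have hab1 : (1 - 2*w/S) + 2*w/S = 1 := by ring
    have h := strictConcaveOn_sin_Icc.concaveOn.2
      (show (0:ℝ) ∈ Set.Icc (0:ℝ) Real.pi from Set.mem_Icc.mpr ⟨le_rfl, hπ.le⟩)
      (show S/2 ∈ Set.Icc (0:ℝ) Real.pi from Set.mem_Icc.mpr ⟨by linarith, by linarith⟩)
      ha hb hab1
    simp only [smul_eq_mul, Real.sin_zero, mul_zero, zero_add] at h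
    have : (2*w/S) * (S/2) = w := by field_simp
    rwa [this] at h
  have hsinS : Real.sin S = 2 * Real.sin (S/2) * Real.cos (S/2) := by
    rw [← Real.sin_two_mul]; congr 1; ring
  have step1 : Real.cos (S/2) * (Real.sin w * w) ≤ Real.cos u * (Real.sin w * w) := by
    apply mul_le_mul_of_nonneg_right hcosu (by positivity)
  have step2 : (Real.sin S / S) * w^2 ≤ Real.cos (S/2) * (Real.sin w * w) := by
    have h2 : 2*w*Real.sin (S/2) ≤ S * Real.sin w := by
      have := mul_le_mul_of_nonneg_right hconc hS0.le
      rw [div_mul_eq_mul_div, div_mul_eq_mul_div, mul_div_assoc,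
        div_self hS0.ne', mul_one] at this
      linarith
    rw [hsinS, div_mul_eq_mul_div, div_le_iff₀ hS0]
    nlinarith [mul_le_mul_of_nonneg_left (mul_le_mul_of_nonneg_right h2 hw0) hcosS]
  linarith

lemma sin_diff_key {S a b : ℝ} (hS0 : 0 < S) (hSπ : S < Real.pi)
    (hab : |a| + |b| ≤ S) :
    (Real.sin S / S) * (a - b)^2 ≤ (Real.sin a - Real.sin b) * (a - b) := by
  set u := (a+b)/2 with hu
  set w := (a-b)/2 with hw
  have hud : |u| ≤ S/2 := by
    rw [hu, abs_div]
    rw [div_le_div_iff₀ (by norm_num : (0:ℝ) < |(2:ℝ)|) (by norm_num : (0:ℝ) < 2)]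
    have := abs_add_le a b
    simp only [abs_two]
    nlinarith [abs_nonneg a, abs_nonneg b]
  have hwd : |w| ≤ S/2 := by
    rw [hw, abs_div]
    rw [div_le_div_iff₀ (by norm_num : (0:ℝ) < |(2:ℝ)|) (by norm_num : (0:ℝ) < 2)]
    have := abs_sub a b
    simp only [abs_two]
    nlinarith [abs_sub_abs_le_abs_sub a b, abs_sub a b]
  have hcore : (Real.sin S / S) * w^2 ≤ Real.cos u * (Real.sin w * w) := by
    rcases le_or_gt 0 w with h0 | h0
    · exact core_sin S u w hS0 hSπ hud h0 ((abs_of_nonneg h0) ▸ hwd)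
    · have := core_sin S u (-w) hS0 hSπ hud (by linarith)
        (by rw [← abs_of_nonneg (by linarith : (0:ℝ) ≤ -w), abs_neg]; exact hwd)
      rw [Real.sin_neg] at this
      calc (Real.sin S / S) * w^2 = (Real.sin S / S) * (-w)^2 := by ring
        _ ≤ Real.cos u * (-Real.sin w * -w) := this
        _ = Real.cos u * (Real.sin w * w) := by ring
  have hsub : Real.sin a - Real.sin b = 2 * Real.sin w * Real.cos u := by
    rw [Real.sin_sub_sin]
  have hab2 : a - b = 2 * w := by rw [hw]; ring
  rw [hsub, hab2]
  nlinarith [hcore]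

lemma sum_sq_diff {N : ℕ} (x : Fin N → ℝ) :
    ∑ i, ∑ j, (x j - x i)^2 = 2*N*(∑ i, (x i)^2) - 2*(∑ i, x i)^2 := by
  have h : ∀ i : Fin N, ∑ j, (x j - x i)^2
      = (∑ j, (x j)^2) - 2*(x i)*(∑ j, x j) + N*(x i)^2 := by
    intro i
    rw [Finset.sum_congr rfl (fun j _ => by ring :
      ∀ j ∈ Finset.univ, (x j - x i)^2 = (x j)^2 - 2*(x i)*(x j) + (x i)^2)]
    rw [Finset.sum_add_distrib, Finset.sum_sub_distrib, ← Finset.mul_sum,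
      Finset.sum_const, Finset.card_univ, Fintype.card_fin, nsmul_eq_mul]
  rw [Finset.sum_congr rfl (fun i _ => h i), Finset.sum_add_distrib,
    Finset.sum_sub_distrib, Finset.sum_const, Finset.card_univ, Fintype.card_fin,
    nsmul_eq_mul, ← Finset.sum_mul, ← Finset.mul_sum]
  rw [← Finset.mul_sum]
  ring

lemma sym_pair {N : ℕ} (y : Fin N → ℝ) (s : Fin N → Fin N → ℝ)
    (hs : ∀ i j, s j i = -s i j) :
    ∑ i, ∑ j, y i * s i j = -(1/2) * ∑ i, ∑ j, (y j - y i) * s i j := by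
  have h1 : ∑ i : Fin N, ∑ j : Fin N, y j * s i j
      = - ∑ i : Fin N, ∑ j : Fin N, y i * s i j := by
    rw [Finset.sum_comm]
    have hb : ∀ b : Fin N, ∑ a : Fin N, y b * s a b = -∑ a : Fin N, y b * s b a := by
      intro b
      rw [← Finset.sum_neg_distrib]
      exact Finset.sum_congr rfl fun a _ => by rw [hs b a]; ring
    calc ∑ b : Fin N, ∑ a : Fin N, y b * s a b
        = ∑ b : Fin N, -∑ a : Fin N, y b * s b a :=
          Finset.sum_congr rfl fun b _ => hb b
      _ = -∑ b : Fin N, ∑ a : Fin N, y b * s b a := Finset.sum_neg_distrib _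
  have h2 : ∑ i : Fin N, ∑ j : Fin N, (y j - y i) * s i j
      = (∑ i : Fin N, ∑ j : Fin N, y j * s i j)
        - ∑ i : Fin N, ∑ j : Fin N, y i * s i j := by
    simp only [sub_mul, Finset.sum_sub_distrib]
  linarith

lemma abs_le_phaseDiam {N : ℕ} (y : Fin N → ℝ) (i j : Fin N) :
    |y i - y j| ≤ phaseDiam y := by
  have hbdd : BddAbove (Set.range fun p : Fin N × Fin N => y p.1 - y p.2) :=
    Set.Finite.bddAbove (Set.finite_range _)
  rw [abs_sub_le_iff]
  exact ⟨le_ciSup hbdd (i, j), le_ciSup hbdd (j, i)⟩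

lemma sin_lip (a b : ℝ) : |Real.sin a - Real.sin b| ≤ |a - b| := by
  rw [Real.sin_sub_sin, abs_mul, abs_mul]
  calc |(2:ℝ)| * |Real.sin ((a-b)/2)| * |Real.cos ((a+b)/2)|
      ≤ |(2:ℝ)| * |(a-b)/2| * 1 := by
        apply mul_le_mul (mul_le_mul_of_nonneg_left (Real.abs_sin_le_abs) (abs_nonneg _))
          (Real.abs_cos_le_one _) (abs_nonneg _) (by positivity)
    _ = |a - b| := by rw [mul_one, abs_div, abs_two]; field_simp

lemma dissipation_core {N : ℕ} (hN : 1 ≤ N) (m γ κ ε Γt : ℝ)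
    (hm : 0 < m) (hκ : 0 < κ) (hε : 0 < ε) (hΓ : 0 < Γt)
    (xx vv aa : Fin N → ℝ) (sd : Fin N → Fin N → ℝ)
    (hanti : ∀ i j, sd j i = - sd i j)
    (hkey : ∀ i j, Γt * (xx j - xx i)^2 ≤ (xx j - xx i) * sd i j)
    (hlip : ∀ i j, |sd i j| ≤ |xx j - xx i|)
    (hsum0 : ∑ i, xx i = 0)
    (hma : ∀ i, m * aa i = -γ * vv i + (κ/N) * ∑ j, sd i j) :
    ε*γ*(∑ i, 2*xx i*vv i)
      + 2*m*ε*(∑ i, (vv i*vv i + xx i*aa i))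
      + m*(∑ i, 2*vv i*aa i)
      + min (2*γ-1-2*m*ε) (κ*(2*Γt*ε-κ)) * ((∑ i, (xx i)^2) + (∑ i, (vv i)^2)) ≤ 0 := by
  have hNpos : (0:ℝ) < (N:ℝ) := by exact_mod_cast hN
  set Sx := ∑ i, (xx i)^2 with hSx
  set Sv := ∑ i, (vv i)^2 with hSv
  set Sxv := ∑ i, xx i * vv i with hSxv
  set f : Fin N → ℝ := fun i => (κ/N) * ∑ j, sd i j with hf
  set T := ∑ i, ∑ j, (xx j - xx i) * sd i j with hT
  set Tv := ∑ i, ∑ j, (vv j - vv i) * sd i j with hTv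
  have hSx0 : 0 ≤ Sx := Finset.sum_nonneg fun i _ => sq_nonneg _
  have hSv0 : 0 ≤ Sv := Finset.sum_nonneg fun i _ => sq_nonneg _
  -- symmetrization
  have stepA : ∑ i, xx i * f i = (κ/N) * (-(1/2) * T) := by
    have e : ∀ i : Fin N, xx i * f i = (κ/N) * ∑ j, xx i * sd i j := by
      intro i; rw [hf]; simp only []
      rw [mul_left_comm, Finset.mul_sum]
    rw [Finset.sum_congr rfl fun i _ => e i, ← Finset.mul_sum, sym_pair xx sd hanti, hT]
  have stepD : ∑ i, vv i * f i = (κ/N) * (-(1/2) * Tv) := by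
    have e : ∀ i : Fin N, vv i * f i = (κ/N) * ∑ j, vv i * sd i j := by
      intro i; rw [hf]; simp only []
      rw [mul_left_comm, Finset.mul_sum]
    rw [Finset.sum_congr rfl fun i _ => e i, ← Finset.mul_sum, sym_pair vv sd hanti, hTv]
  -- sums of squared differences
  have hddsum : ∑ i, ∑ j, (xx j - xx i)^2 = 2*(N:ℝ)*Sx := by
    rw [hSx, sum_sq_diff xx, hsum0]; ring
  have hdvsum : ∑ i, ∑ j, (vv j - vv i)^2 ≤ 2*(N:ℝ)*Sv := by
    rw [hSv, sum_sq_diff vv]; nlinarith [sq_nonneg (∑ i, vv i)]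
  -- lower bound for T
  have stepB : Γt * (2*(N:ℝ)*Sx) ≤ T := by
    calc Γt * (2*(N:ℝ)*Sx) = ∑ i, ∑ j, Γt * (xx j - xx i)^2 := by
          rw [← hddsum, Finset.mul_sum]
          exact Finset.sum_congr rfl fun i _ => Finset.mul_sum _ _ _
      _ ≤ T := by
          rw [hT]
          exact Finset.sum_le_sum fun i _ => Finset.sum_le_sum fun j _ => hkey i j
  -- upper bound for -Tv
  have hTv1 : -Tv ≤ ∑ i, ∑ j, |vv j - vv i| * |xx j - xx i| := by
    rw [hTv, ← Finset.sum_neg_distrib]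
    apply Finset.sum_le_sum; intro i _
    rw [← Finset.sum_neg_distrib]
    apply Finset.sum_le_sum; intro j _
    calc -((vv j - vv i) * sd i j) ≤ |(vv j - vv i) * sd i j| := neg_le_abs _
      _ = |vv j - vv i| * |sd i j| := abs_mul _ _
      _ ≤ |vv j - vv i| * |xx j - xx i| :=
          mul_le_mul_of_nonneg_left (hlip i j) (abs_nonneg _)
  have hTv2 : 2*κ*(∑ i, ∑ j, |vv j - vv i| * |xx j - xx i|)
      ≤ (∑ i, ∑ j, (vv j - vv i)^2) + κ^2*(∑ i, ∑ j, (xx j - xx i)^2) := by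
    rw [Finset.mul_sum, Finset.mul_sum, ← Finset.sum_add_distrib]
    apply Finset.sum_le_sum; intro i _
    rw [Finset.mul_sum, Finset.mul_sum, ← Finset.sum_add_distrib]
    apply Finset.sum_le_sum; intro j _
    nlinarith [sq_nonneg (|vv j - vv i| - κ * |xx j - xx i|), sq_abs (vv j - vv i),
      sq_abs (xx j - xx i), abs_nonneg (vv j - vv i), abs_nonneg (xx j - xx i)]
  -- bound for ∑ xx*f
  have stepC : ∑ i, xx i * f i ≤ -(κ*Γt)*Sx := by
    have hc0 : (0:ℝ) ≤ κ/(2*(N:ℝ)) := by positivity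
    have h1 := mul_le_mul_of_nonneg_left stepB hc0
    have heq : (κ/(2*(N:ℝ)))*(Γt*(2*(N:ℝ)*Sx)) = κ*Γt*Sx := by
      field_simp
    have hA' : ∑ i, xx i * f i = -(κ/(2*(N:ℝ)))*T := by rw [stepA]; ring
    linarith
  -- bound for 2 ∑ vv*f
  have stepG : 2*(∑ i, vv i * f i) ≤ Sv + κ^2*Sx := by
    have hc1 : (0:ℝ) ≤ κ/(N:ℝ) := by positivity
    have g1 := mul_le_mul_of_nonneg_left hTv1 hc1
    have hc2 : (0:ℝ) ≤ 1/(2*(N:ℝ)) := by positivity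
    have g2 := mul_le_mul_of_nonneg_left hTv2 hc2
    have e1 : (κ/(N:ℝ))*(∑ i, ∑ j, |vv j - vv i| * |xx j - xx i|)
        = (1/(2*(N:ℝ)))*(2*κ*(∑ i, ∑ j, |vv j - vv i| * |xx j - xx i|)) := by
      field_simp
    have g3 : (1/(2*(N:ℝ)))*((∑ i, ∑ j, (vv j - vv i)^2) + κ^2*(∑ i, ∑ j, (xx j - xx i)^2))
        ≤ (1/(2*(N:ℝ)))*(2*(N:ℝ)*Sv + κ^2*(2*(N:ℝ)*Sx)) := by
      apply mul_le_mul_of_nonneg_left _ hc2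
      rw [hddsum]
      linarith [hdvsum]
    have e2 : (1/(2*(N:ℝ)))*(2*(N:ℝ)*Sv + κ^2*(2*(N:ℝ)*Sx)) = Sv + κ^2*Sx := by
      field_simp
    have hD' : 2*(∑ i, vv i * f i) = (κ/(N:ℝ))*(-Tv) := by rw [stepD]; ring
    linarith
  -- rewrite the derivative expression
  have e1 : ∑ i, 2*xx i*vv i = 2*Sxv := by
    rw [hSxv, Finset.mul_sum]
    exact Finset.sum_congr rfl fun i _ => by ring
  have e2 : ∑ i, (vv i*vv i + xx i*aa i) = Sv + ∑ i, xx i*aa i := by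
    rw [hSv, ← Finset.sum_add_distrib]
    exact Finset.sum_congr rfl fun i _ => by ring
  have e3 : ∑ i, 2*vv i*aa i = 2*(∑ i, vv i*aa i) := by
    rw [Finset.mul_sum]
    exact Finset.sum_congr rfl fun i _ => by ring
  have hxa : m*(∑ i, xx i*aa i) = -γ*Sxv + ∑ i, xx i * f i := by
    rw [Finset.mul_sum]
    calc ∑ i, m*(xx i*aa i) = ∑ i, (-γ*(xx i*vv i) + xx i * f i) := by
          apply Finset.sum_congr rfl; intro i _
          rw [hf]; simp only []
          linear_combination xx i * (hma i)
      _ = -γ*Sxv + ∑ i, xx i * f i := by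
          rw [Finset.sum_add_distrib, hSxv, Finset.mul_sum]
  have hva : m*(∑ i, vv i*aa i) = -γ*Sv + ∑ i, vv i * f i := by
    rw [Finset.mul_sum]
    calc ∑ i, m*(vv i*aa i) = ∑ i, (-γ*(vv i)^2 + vv i * f i) := by
          apply Finset.sum_congr rfl; intro i _
          rw [hf]; simp only []
          linear_combination vv i * (hma i)
      _ = -γ*Sv + ∑ i, vv i * f i := by
          rw [Finset.sum_add_distrib, hSv, Finset.mul_sum]
  -- final assembly
  have hxa2 : 2*ε*(m*(∑ i, xx i*aa i)) = 2*ε*(-γ*Sxv + ∑ i, xx i * f i) := by rw [hxa]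
  have hva2 : 2*(m*(∑ i, vv i*aa i)) = 2*(-γ*Sv + ∑ i, vv i * f i) := by rw [hva]
  have hmin1 : min (2*γ-1-2*m*ε) (κ*(2*Γt*ε-κ)) * Sv ≤ (2*γ-1-2*m*ε) * Sv :=
    mul_le_mul_of_nonneg_right (min_le_left _ _) hSv0
  have hmin2 : min (2*γ-1-2*m*ε) (κ*(2*Γt*ε-κ)) * Sx ≤ (κ*(2*Γt*ε-κ)) * Sx :=
    mul_le_mul_of_nonneg_right (min_le_right _ _) hSx0
  have hxf2 : 2*ε*(∑ i, xx i * f i) ≤ 2*ε*(-(κ*Γt)*Sx) :=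
    mul_le_mul_of_nonneg_left stepC (by positivity)
  rw [e1, e2, e3]
  linarith [hxa2, hva2, hmin1, hmin2, hxf2, stepG, hSx0, hSv0]

/-- Lyapunov dissipation estimate for the difference of two
solutions of the inertial Kuramoto model for identical oscillators with
all-to-all coupling: with `X = Θ − Θ̃`, `V = Ω − Ω̃` and
`E_ε = εγ‖X‖² + 2mε⟨X,V⟩ + m‖V‖²`, for every
`ε ∈ [κ/(2Γ̃), (2γ−1)/(2m)]` and all `t > 0`,
`d/dt E_ε(t) + min{2γ−1−2mε, κ(2Γ̃ε−κ)}·(‖X(t)‖² + ‖V(t)‖²) ≤ 0`. -/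
theorem kuramoto_inertia_lyapunov_dissipation
    (N : ℕ) (hN : 1 ≤ N)
    (m γ κ : ℝ) (hm : 0 < m) (hγpos : 0 < γ) (hκ : 0 < κ)
    (θ θt : ℝ → Fin N → ℝ)
    (hreg : ∀ i, ContDiff ℝ 2 (fun t => θ t i))
    (hregt : ∀ i, ContDiff ℝ 2 (fun t => θt t i))
    (hode : ∀ t ≥ (0:ℝ), ∀ i,
      m * deriv (deriv (fun s => θ s i)) t
        = -γ * deriv (fun s => θ s i) t
          + (κ / N) * ∑ j, Real.sin (θ t j - θ t i))
    (hodet : ∀ t ≥ (0:ℝ), ∀ i,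
      m * deriv (deriv (fun s => θt s i)) t
        = -γ * deriv (fun s => θt s i) t
          + (κ / N) * ∑ j, Real.sin (θt t j - θt t i))
    (hθ0 : ∑ i, θ 0 i = 0) (hθt0 : ∑ i, θt 0 i = 0)
    (hω0 : ∑ i, deriv (fun s => θ s i) 0 = 0)
    (hωt0 : ∑ i, deriv (fun s => θt s i) 0 = 0)
    (hγ : 1 / 2 < γ)
    (S : ℝ) (hS0 : 0 < S) (hSπ : S < Real.pi)
    (hD : ∀ t ≥ (0:ℝ), phaseDiam (θ t) + phaseDiam (θt t) ≤ S)
    (Γt : ℝ) (hΓt : Γt = Real.sin S / S)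
    (X V : ℝ → Fin N → ℝ)
    (hX : X = fun t i => θ t i - θt t i)
    (hV : V = fun t i =>
      deriv (fun s => θ s i) t - deriv (fun s => θt s i) t)
    (Eε : ℝ → ℝ → ℝ)
    (hEε : Eε = fun ε t =>
      ε * γ * (∑ i, (X t i) ^ 2) + 2 * m * ε * (∑ i, X t i * V t i)
        + m * (∑ i, (V t i) ^ 2)) :
    ∀ ε : ℝ, κ / (2 * Γt) ≤ ε → ε ≤ (2 * γ - 1) / (2 * m) →
      ∀ t > (0:ℝ),
        deriv (fun s => Eε ε s) t
          + min (2 * γ - 1 - 2 * m * ε) (κ * (2 * Γt * ε - κ))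
            * ((∑ i, (X t i) ^ 2) + (∑ i, (V t i) ^ 2)) ≤ 0 := by
  have hθ1 : ∀ i, Differentiable ℝ (fun s => θ s i) :=
    fun i => (hreg i).differentiable (by norm_num)
  have hθt1 : ∀ i, Differentiable ℝ (fun s => θt s i) :=
    fun i => (hregt i).differentiable (by norm_num)
  have hθ2 : ∀ i, Differentiable ℝ (deriv (fun s => θ s i)) := by
    intro i; have h := hreg i
    rw [show ((2:WithTop ℕ∞)) = 1 + 1 by norm_num] at h
    exact (contDiff_succ_iff_deriv.mp h).2.2.differentiable one_ne_zero
  have hθt2 : ∀ i, Differentiable ℝ (deriv (fun s => θt s i)) := by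
    intro i; have h := hregt i
    rw [show ((2:WithTop ℕ∞)) = 1 + 1 by norm_num] at h
    exact (contDiff_succ_iff_deriv.mp h).2.2.differentiable one_ne_zero
  set u : ℝ → ℝ :=
    fun r => (∑ i, deriv (fun s => θ s i) r) - ∑ i, deriv (fun s => θt s i) r with hu_def
  have hu_diff : Differentiable ℝ u := by
    apply Differentiable.sub <;>
      exact Differentiable.fun_sum fun i _ => by first | exact hθ2 i | exact hθt2 i
  have hzs : ∀ (y : Fin N → ℝ), ∑ i, ∑ j, Real.sin (y j - y i) = 0 := by
    intro y
    have h1 : ∑ i : Fin N, ∑ j : Fin N, Real.sin (y j - y i)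
        = - ∑ i : Fin N, ∑ j : Fin N, Real.sin (y j - y i) := by
      nth_rewrite 1 [Finset.sum_comm]
      rw [← Finset.sum_neg_distrib]
      refine Finset.sum_congr rfl fun i _ => ?_
      rw [← Finset.sum_neg_distrib]
      refine Finset.sum_congr rfl fun j _ => ?_
      rw [← neg_sub (y j) (y i), Real.sin_neg]
    linarith
  have hu_ode : ∀ r ≥ (0:ℝ), HasDerivAt u (-(γ/m) * u r) r := by
    intro r hr
    have h1 : HasDerivAt u
        ((∑ i, deriv (deriv (fun s => θ s i)) r)
          - ∑ i, deriv (deriv (fun s => θt s i)) r) r :=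
      (HasDerivAt.fun_sum fun i _ => ((hθ2 i) r).hasDerivAt).sub
        (HasDerivAt.fun_sum fun i _ => ((hθt2 i) r).hasDerivAt)
    have hsum1 : m * ∑ i, deriv (deriv (fun s => θ s i)) r
        = -γ * ∑ i, deriv (fun s => θ s i) r := by
      rw [Finset.mul_sum, Finset.sum_congr rfl fun i _ => hode r hr i,
        Finset.sum_add_distrib, ← Finset.mul_sum, ← Finset.mul_sum, hzs (θ r)]
      ring
    have hsum2 : m * ∑ i, deriv (deriv (fun s => θt s i)) r
        = -γ * ∑ i, deriv (fun s => θt s i) r := by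
      rw [Finset.mul_sum, Finset.sum_congr rfl fun i _ => hodet r hr i,
        Finset.sum_add_distrib, ← Finset.mul_sum, ← Finset.mul_sum, hzs (θt r)]
      ring
    have key : m * ((∑ i, deriv (deriv (fun s => θ s i)) r)
        - ∑ i, deriv (deriv (fun s => θt s i)) r) = -γ * u r := by
      rw [hu_def]; simp only []
      rw [mul_sub, hsum1, hsum2]; ring
    convert h1 using 1
    field_simp
    linarith [key]
  have hu0 : u 0 = 0 := by rw [hu_def]; simp only []; rw [hω0, hωt0]; ring
  have huz : ∀ r ≥ (0:ℝ), u r = 0 := by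
    intro r hr
    set g : ℝ → ℝ := fun s => u s * Real.exp ((γ/m) * s) with hg_def
    have hgc : ContinuousOn g (Set.Icc 0 r) :=
      (hu_diff.continuous.mul (by continuity)).continuousOn
    have hgd : ∀ x ∈ Set.Ico (0:ℝ) r, HasDerivWithinAt g 0 (Set.Ici x) x := by
      intro x hx
      have hexp : HasDerivAt (fun s => Real.exp ((γ/m) * s))
          (Real.exp ((γ/m)*x) * (γ/m)) x := by
        simpa using ((hasDerivAt_id x).const_mul (γ/m)).exp
      have hmul := (hu_ode x hx.1).fun_mul hexp
      have hg0 : HasDerivAt g 0 x := by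
        rw [hg_def]
        have h0 : -(γ / m) * u x * Real.exp (γ / m * x)
            + u x * (Real.exp (γ / m * x) * (γ / m)) = 0 := by ring
        rw [h0] at hmul
        exact hmul
      exact hg0.hasDerivWithinAt
    have hcst := constant_of_has_deriv_right_zero hgc hgd r (Set.mem_Icc.mpr ⟨hr, le_rfl⟩)
    rw [hg_def] at hcst
    simp only [hu0, zero_mul] at hcst
    rcases mul_eq_zero.mp hcst with h' | h'
    · exact h'
    · exact absurd h' (Real.exp_ne_zero _)
  have hXsum : ∀ r ≥ (0:ℝ), ∑ i, (θ r i - θt r i) = 0 := by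
    intro r hr
    have hc : ContinuousOn (fun s => (∑ i, θ s i) - ∑ i, θt s i) (Set.Icc 0 r) :=
      (((Differentiable.fun_sum fun i _ => hθ1 i).sub
        (Differentiable.fun_sum fun i _ => hθt1 i)).continuous).continuousOn
    have hd : ∀ x ∈ Set.Ico (0:ℝ) r, HasDerivWithinAt
        (fun s => (∑ i, θ s i) - ∑ i, θt s i) 0 (Set.Ici x) x := by
      intro x hx
      have h0 : HasDerivAt (fun s => (∑ i, θ s i) - ∑ i, θt s i) (u x) x := by
        rw [hu_def]
        exact (HasDerivAt.fun_sum fun i _ => ((hθ1 i) x).hasDerivAt).sub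
          (HasDerivAt.fun_sum fun i _ => ((hθt1 i) x).hasDerivAt)
      rw [huz x hx.1] at h0
      exact h0.hasDerivWithinAt
    have hcst := constant_of_has_deriv_right_zero hc hd r (Set.mem_Icc.mpr ⟨hr, le_rfl⟩)
    rw [Finset.sum_sub_distrib]
    rw [hθ0, hθt0] at hcst
    simpa using hcst

  intro ε hε1 hε2 t ht
  have hNpos : (0:ℝ) < (N:ℝ) := by exact_mod_cast hN
  have hsinS : 0 < Real.sin S := Real.sin_pos_of_pos_of_lt_pi hS0 hSπ
  have hΓpos : 0 < Γt := by rw [hΓt]; exact div_pos hsinS hS0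
  have hεpos : 0 < ε := lt_of_lt_of_le (by positivity) hε1
  have hXd : ∀ (i : Fin N) (r : ℝ), HasDerivAt (fun s => θ s i - θt s i)
      (deriv (fun s => θ s i) r - deriv (fun s => θt s i) r) r :=
    fun i r => (((hθ1 i) r).hasDerivAt).sub (((hθt1 i) r).hasDerivAt)
  have hVd : ∀ (i : Fin N) (r : ℝ), HasDerivAt
      (fun s => deriv (fun s' => θ s' i) s - deriv (fun s' => θt s' i) s)
      (deriv (deriv (fun s' => θ s' i)) r - deriv (deriv (fun s' => θt s' i)) r) r :=
    fun i r => (((hθ2 i) r).hasDerivAt).sub (((hθt2 i) r).hasDerivAt)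
  simp only [hEε, hX, hV]
  have hE : HasDerivAt (fun s => ε * γ * (∑ i, (θ s i - θt s i) ^ 2)
      + 2 * m * ε * (∑ i, (θ s i - θt s i) *
          (deriv (fun s' => θ s' i) s - deriv (fun s' => θt s' i) s))
      + m * (∑ i, (deriv (fun s' => θ s' i) s - deriv (fun s' => θt s' i) s) ^ 2))
    (ε * γ * (∑ i, 2 * (θ t i - θt t i) *
        (deriv (fun s' => θ s' i) t - deriv (fun s' => θt s' i) t))
      + 2 * m * ε * (∑ i, ((deriv (fun s' => θ s' i) t - deriv (fun s' => θt s' i) t) *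
            (deriv (fun s' => θ s' i) t - deriv (fun s' => θt s' i) t)
          + (θ t i - θt t i) *
            (deriv (deriv (fun s' => θ s' i)) t - deriv (deriv (fun s' => θt s' i)) t)))
      + m * (∑ i, 2 * (deriv (fun s' => θ s' i) t - deriv (fun s' => θt s' i) t) *
          (deriv (deriv (fun s' => θ s' i)) t - deriv (deriv (fun s' => θt s' i)) t))) t := by
    refine HasDerivAt.add (HasDerivAt.add ?_ ?_) ?_
    · exact (HasDerivAt.fun_sum fun i _ => by simpa using ((hXd i t).fun_pow 2)).const_mul (ε*γ)
    · exact (HasDerivAt.fun_sum fun i _ => (hXd i t).mul (hVd i t)).const_mul (2*m*ε)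
    · exact (HasDerivAt.fun_sum fun i _ => by simpa using ((hVd i t).fun_pow 2)).const_mul m
  rw [hE.deriv]
  -- apply the algebraic core lemma
  have hD' := hD t ht.le
  exact dissipation_core hN m γ κ ε Γt hm hκ hεpos hΓpos
    (fun i => θ t i - θt t i)
    (fun i => deriv (fun s' => θ s' i) t - deriv (fun s' => θt s' i) t)
    (fun i => deriv (deriv (fun s' => θ s' i)) t - deriv (deriv (fun s' => θt s' i)) t)
    (fun i j => Real.sin (θ t j - θ t i) - Real.sin (θt t j - θt t i))
    (by
      intro i j
      rw [← neg_sub (θ t j) (θ t i), Real.sin_neg,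
        ← neg_sub (θt t j) (θt t i), Real.sin_neg]
      ring)
    (by
      intro i j
      have h1 : |θ t j - θ t i| ≤ phaseDiam (θ t) := abs_le_phaseDiam (θ t) j i
      have h2 : |θt t j - θt t i| ≤ phaseDiam (θt t) := abs_le_phaseDiam (θt t) j i
      have hab : |θ t j - θ t i| + |θt t j - θt t i| ≤ S := by linarith
      have hk := sin_diff_key hS0 hSπ hab
      rw [hΓt]
      linear_combination hk)
    (by
      intro i j
      rw [show (θ t j - θt t j) - (θ t i - θt t i)
        = (θ t j - θ t i) - (θt t j - θt t i) by ring]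
      exact sin_lip _ _)
    (hXsum t ht.le)
    (by
      intro i
      have h1 := hode t ht.le i
      have h2 := hodet t ht.le i
      rw [Finset.sum_sub_distrib]
      linear_combination h1 - h2)
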